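/- Under the factor model, for every t ≥ 0 and every r ∈ ℝ^d the score of the time-t marginal decomposes into a subspace component and a complement component: ∇ log p_t(r) = Λ_t⁻¹ β Γ_t · ∇ log p_t^fac(Γ_t βᵀ Λ_t⁻¹ r) − Λ_t^{-1/2}(I_d − T_t) Λ_t^{-1/2} r. (Here Λ_t⁻¹ β Γ_t = Λ_t^{-1/2} T_t Λ_t^{1/2} β and Γ_t βᵀ Λ_t⁻¹ = βᵀ Λ_t^{1/2} T_t Λ_t^{-1/2}, so the first summand, the subspace score, lies in the column space of Λ_t^{-1/2} β, while the second, the complement score, is linear in r and orthogonal to that space after rescaling by Λ_t^{1/2}.) -/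

import Mathlib

open MeasureTheory Matrix

noncomputable section

/-- Euclidean (ℓ²) norm on `Fin n → ℝ`. -/
def eucNorm {n : ℕ} (x : Fin n → ℝ) : ℝ := Real.sqrt (∑ i, x i ^ 2)

/-- The `n`-dimensional Gaussian density `φ(x; μ, S)`. -/
def gaussD (n : ℕ) (x μ : Fin n → ℝ) (S : Matrix (Fin n) (Fin n) ℝ) : ℝ :=
  (2 * Real.pi) ^ (-(n : ℝ) / 2) * S.det ^ (-(1 : ℝ) / 2) *
    Real.exp (-((x - μ) ⬝ᵥ (S⁻¹ *ᵥ (x - μ))) / 2)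

/-- Gradient as the vector of partial derivatives. -/
def gradv {n : ℕ} (f : (Fin n → ℝ) → ℝ) (x : Fin n → ℝ) : Fin n → ℝ :=
  fun i => fderiv ℝ f x (Pi.single i 1)

/-- `α_t = e^{-t/2}`. -/
def af (t : ℝ) : ℝ := Real.exp (-t / 2)

/-- `h_t = 1 - α_t²`. -/
def hf (t : ℝ) : ℝ := 1 - af t ^ 2

/-- `Λ_t = diag(h_t + σ_i² α_t²)`. -/
def Lam {d : ℕ} (σ : Fin d → ℝ) (t : ℝ) : Matrix (Fin d) (Fin d) ℝ :=
  Matrix.diagonal fun i => hf t + σ i ^ 2 * af t ^ 2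

/-- `Λ_t^{-1/2}`. -/
def LamInvSqrt {d : ℕ} (σ : Fin d → ℝ) (t : ℝ) : Matrix (Fin d) (Fin d) ℝ :=
  Matrix.diagonal fun i => (Real.sqrt (hf t + σ i ^ 2 * af t ^ 2))⁻¹

/-- `Γ_t = (βᵀ Λ_t⁻¹ β)⁻¹`. -/
def Gam {d k : ℕ} (β : Matrix (Fin d) (Fin k) ℝ) (σ : Fin d → ℝ) (t : ℝ) :
    Matrix (Fin k) (Fin k) ℝ :=
  (βᵀ * (Lam σ t)⁻¹ * β)⁻¹

/-- `T_t = Λ_t^{-1/2} β Γ_t βᵀ Λ_t^{-1/2}`. -/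
def Tproj {d k : ℕ} (β : Matrix (Fin d) (Fin k) ℝ) (σ : Fin d → ℝ) (t : ℝ) :
    Matrix (Fin d) (Fin d) ℝ :=
  LamInvSqrt σ t * β * Gam β σ t * βᵀ * LamInvSqrt σ t

/-- Time-`t` marginal density `p_t`. -/
def pT {d k : ℕ} (β : Matrix (Fin d) (Fin k) ℝ) (σ : Fin d → ℝ)
    (pfac : (Fin k → ℝ) → ℝ) (t : ℝ) (r : Fin d → ℝ) : ℝ :=
  ∫ f : Fin k → ℝ, gaussD d r (af t • (β *ᵥ f)) (Lam σ t) * pfac f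

/-- Smoothed factor density `p_t^fac`. -/
def pTfac {d k : ℕ} (β : Matrix (Fin d) (Fin k) ℝ) (σ : Fin d → ℝ)
    (pfac : (Fin k → ℝ) → ℝ) (t : ℝ) (y : Fin k → ℝ) : ℝ :=
  ∫ f : Fin k → ℝ, gaussD k y (af t • f) (Gam β σ t) * pfac f

namespace ScoreAux

/-- dot-product with a fixed vector as a continuous linear map -/
def dotCLM {m : ℕ} (w : Fin m → ℝ) : (Fin m → ℝ) →L[ℝ] ℝ :=
  LinearMap.toContinuousLinearMap
    { toFun := fun v => w ⬝ᵥ v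
      map_add' := fun a b => by simp [dotProduct_add]
      map_smul' := fun c a => by simp [dotProduct_smul] }

@[simp] lemma dotCLM_apply {m : ℕ} (w v : Fin m → ℝ) : dotCLM w v = w ⬝ᵥ v := rfl

/-- mulVec as a continuous linear map -/
def mulVecCLM {m n : ℕ} (M : Matrix (Fin m) (Fin n) ℝ) : (Fin n → ℝ) →L[ℝ] (Fin m → ℝ) :=
  LinearMap.toContinuousLinearMap (Matrix.mulVecLin M)

@[simp] lemma mulVecCLM_apply {m n : ℕ} (M : Matrix (Fin m) (Fin n) ℝ) (v : Fin n → ℝ) :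
    mulVecCLM M v = M *ᵥ v := rfl

lemma dot_symm_move {m : ℕ} (M : Matrix (Fin m) (Fin m) ℝ) (hM : Mᵀ = M) (v w : Fin m → ℝ) :
    v ⬝ᵥ M *ᵥ w = (M *ᵥ v) ⬝ᵥ w := by
  rw [Matrix.dotProduct_mulVec, ← hM, Matrix.mulVec_transpose, hM]

/-- derivative of a symmetric quadratic form -/
lemma hasFDerivAt_quadform {m : ℕ} (M : Matrix (Fin m) (Fin m) ℝ) (hM : Mᵀ = M)
    (z : Fin m → ℝ) :
    HasFDerivAt (fun z : Fin m → ℝ => z ⬝ᵥ M *ᵥ z) (dotCLM ((2 : ℝ) • (M *ᵥ z))) z := by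
  have h : ∀ i : Fin m, HasFDerivAt (fun z : Fin m → ℝ => z i * (M *ᵥ z) i)
      ((z i • ((ContinuousLinearMap.proj i).comp (mulVecCLM M))) +
        ((M *ᵥ z) i • (ContinuousLinearMap.proj (R := ℝ) (φ := fun _ : Fin m => ℝ) i))) z := by
    intro i
    have h1 : HasFDerivAt (fun g : Fin m → ℝ => g i)
        (ContinuousLinearMap.proj (R := ℝ) (φ := fun _ : Fin m => ℝ) i) z := hasFDerivAt_apply i z
    have h2 : HasFDerivAt (fun g : Fin m → ℝ => (M *ᵥ g) i)
        ((ContinuousLinearMap.proj i).comp (mulVecCLM M)) z :=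
      (((ContinuousLinearMap.proj (R := ℝ) (φ := fun _ : Fin m => ℝ) i).comp
        (mulVecCLM M)).hasFDerivAt (x := z))
    exact h1.mul h2
  have hsum := HasFDerivAt.fun_sum (fun i (_ : i ∈ Finset.univ) => h i)
  have heq : (fun z : Fin m → ℝ => z ⬝ᵥ M *ᵥ z)
      = fun z : Fin m → ℝ => ∑ i, z i * (M *ᵥ z) i := rfl
  rw [heq]
  refine hsum.congr_fderiv (Eq.symm ?_)
  apply ContinuousLinearMap.ext; intro v
  simp only [dotCLM_apply, ContinuousLinearMap.sum_apply, ContinuousLinearMap.add_apply,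
    ContinuousLinearMap.smul_apply, ContinuousLinearMap.coe_comp', Function.comp_apply,
    mulVecCLM_apply, ContinuousLinearMap.proj_apply]
  have : ((2 : ℝ) • (M *ᵥ z)) ⬝ᵥ v = z ⬝ᵥ (M *ᵥ v) + (M *ᵥ z) ⬝ᵥ v := by
    rw [dot_symm_move M hM z v]
    rw [smul_dotProduct, smul_eq_mul]
    ring
  rw [this]
  simp [dotProduct, Finset.sum_add_distrib, smul_eq_mul, mul_comm]

lemma inv_diagonal_pos {m : ℕ} (v : Fin m → ℝ) (hv : ∀ i, 0 < v i) :
    (Matrix.diagonal v)⁻¹ = Matrix.diagonal (fun i => (v i)⁻¹) := by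
  apply Matrix.inv_eq_right_inv
  rw [Matrix.diagonal_mul_diagonal]
  have : (fun i => v i * (v i)⁻¹) = fun _ => (1 : ℝ) := by
    funext i; exact mul_inv_cancel₀ (hv i).ne'
  rw [this, Matrix.diagonal_one]

end ScoreAux

namespace ScoreAux

lemma dot_mulVec_move {m n : ℕ} (M : Matrix (Fin m) (Fin n) ℝ) (v : Fin m → ℝ) (w : Fin n → ℝ) :
    v ⬝ᵥ M *ᵥ w = (Mᵀ *ᵥ v) ⬝ᵥ w := by
  rw [Matrix.dotProduct_mulVec, Matrix.mulVec_transpose]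

section model

variable {d k : ℕ} (β : Matrix (Fin d) (Fin k) ℝ) (σ : Fin d → ℝ) (t : ℝ)

/-- diagonal entries of Λ_t -/
def lam (σ : Fin d → ℝ) (t : ℝ) (i : Fin d) : ℝ := hf t + σ i ^ 2 * af t ^ 2

lemma af_sq_le_one (htnn : 0 ≤ t) : af t ^ 2 ≤ 1 := by
  rw [af, ← Real.exp_nat_mul]
  apply Real.exp_le_one_iff.2
  nlinarith

lemma lam_pos (hσpos : ∀ i, 0 < σ i) (htnn : 0 ≤ t) (i : Fin d) : 0 < lam σ t i := by
  have h1 : 0 ≤ hf t := by unfold hf; nlinarith [af_sq_le_one t htnn]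
  have h2 : 0 < σ i ^ 2 * af t ^ 2 := by
    have := hσpos i
    have : 0 < af t := Real.exp_pos _
    positivity
  simp [lam]; linarith

lemma lam_le (σmax : ℝ) (hσpos : ∀ i, 0 < σ i) (hσmax : ∀ i, σ i ≤ σmax) (htnn : 0 ≤ t)
    (i : Fin d) : lam σ t i ≤ 1 + σmax ^ 2 := by
  have h1 : hf t ≤ 1 := by unfold hf; nlinarith [sq_nonneg (af t)]
  have h2 : σ i ^ 2 * af t ^ 2 ≤ σmax ^ 2 := by
    have h3 : σ i ^ 2 ≤ σmax ^ 2 := by nlinarith [hσpos i, hσmax i]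
    nlinarith [af_sq_le_one t htnn, sq_nonneg (af t), (hσpos i)]
  simp only [lam]; linarith

lemma Lam_inv (hσpos : ∀ i, 0 < σ i) (htnn : 0 ≤ t) :
    (Lam σ t)⁻¹ = Matrix.diagonal (fun i => (lam σ t i)⁻¹) := by
  apply Matrix.inv_eq_right_inv
  show Matrix.diagonal (lam σ t) * _ = 1
  rw [Matrix.diagonal_mul_diagonal]
  have : (fun i => lam σ t i * (lam σ t i)⁻¹) = fun _ => (1 : ℝ) := by
    funext i; exact mul_inv_cancel₀ (lam_pos σ t hσpos htnn i).ne'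
  rw [this, Matrix.diagonal_one]

/-- the matrix `G = βᵀ Λ⁻¹ β = Γ⁻¹` -/
def Gm : Matrix (Fin k) (Fin k) ℝ := βᵀ * (Lam σ t)⁻¹ * β

lemma Gm_sym (hσpos : ∀ i, 0 < σ i) (htnn : 0 ≤ t) : (Gm β σ t)ᵀ = Gm β σ t := by
  simp [Gm, Lam_inv σ t hσpos htnn, Matrix.transpose_mul, Matrix.diagonal_transpose,
    Matrix.mul_assoc]

lemma quad_Gm (hσpos : ∀ i, 0 < σ i) (htnn : 0 ≤ t) (z : Fin k → ℝ) :
    z ⬝ᵥ (Gm β σ t) *ᵥ z = ∑ i, (lam σ t i)⁻¹ * ((β *ᵥ z) i) ^ 2 := by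
  rw [Gm, Lam_inv σ t hσpos htnn]
  rw [show βᵀ * Matrix.diagonal (fun i => (lam σ t i)⁻¹) * β
      = βᵀ * (Matrix.diagonal (fun i => (lam σ t i)⁻¹) * β) from Matrix.mul_assoc _ _ _]
  rw [← Matrix.mulVec_mulVec, ← Matrix.mulVec_mulVec]
  rw [dot_mulVec_move βᵀ z _, Matrix.transpose_transpose]
  simp [Matrix.mulVec_diagonal, dotProduct]
  congr 1; funext i; ring

lemma norm_pres (hβ : βᵀ * β = 1) (z : Fin k → ℝ) :
    (β *ᵥ z) ⬝ᵥ (β *ᵥ z) = z ⬝ᵥ z := by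
  rw [dot_mulVec_move β _ z, Matrix.mulVec_mulVec, hβ, Matrix.one_mulVec]

lemma quad_Gm_lower (hβ : βᵀ * β = 1) (σmax : ℝ) (hσpos : ∀ i, 0 < σ i)
    (hσmax : ∀ i, σ i ≤ σmax) (htnn : 0 ≤ t) (z : Fin k → ℝ) :
    (1 + σmax ^ 2)⁻¹ * (z ⬝ᵥ z) ≤ z ⬝ᵥ (Gm β σ t) *ᵥ z := by
  have hM : (0:ℝ) < 1 + σmax ^ 2 := by positivity
  rw [quad_Gm β σ t hσpos htnn z, ← norm_pres β hβ z]
  have h1 : (β *ᵥ z) ⬝ᵥ (β *ᵥ z) = ∑ i, ((β *ᵥ z) i) ^ 2 := by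
    simp [dotProduct, sq]
  rw [h1, Finset.mul_sum]
  apply Finset.sum_le_sum
  intro i _
  have h2 : (1 + σmax ^ 2)⁻¹ ≤ (lam σ t i)⁻¹ :=
    inv_anti₀ (lam_pos σ t hσpos htnn i) (lam_le σ t σmax hσpos hσmax htnn i)
  nlinarith [sq_nonneg ((β *ᵥ z) i)]

end model
end ScoreAux

namespace ScoreAux
section model2
variable {d k : ℕ} (β : Matrix (Fin d) (Fin k) ℝ) (σ : Fin d → ℝ) (t : ℝ)
  (σmax : ℝ) (hβ : βᵀ * β = 1) (hσpos : ∀ i, 0 < σ i) (hσmax : ∀ i, σ i ≤ σmax)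
  (htnn : 0 ≤ t)

lemma dot_self_pos {m : ℕ} {z : Fin m → ℝ} (hz : z ≠ 0) : 0 < z ⬝ᵥ z := by
  have h1 : ∃ i, z i ≠ 0 := by
    by_contra h; push_neg at h; exact hz (funext h)
  obtain ⟨i, hi⟩ := h1
  have hterm : 0 < z i * z i := mul_self_pos.2 hi
  have : z ⬝ᵥ z = ∑ j, z j * z j := rfl
  rw [this]
  exact Finset.sum_pos' (fun j _ => mul_self_nonneg (z j)) ⟨i, Finset.mem_univ i, hterm⟩

include hβ hσpos hσmax htnn in
lemma Gm_posdef : (Gm β σ t).PosDef := by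
  rw [posDef_iff_dotProduct_mulVec]
  constructor
  · show (Gm β σ t)ᴴ = Gm β σ t
    have : (Gm β σ t)ᴴ = (Gm β σ t)ᵀ := by
      ext i j; simp [Matrix.conjTranspose]
    rw [this, Gm_sym β σ t hσpos htnn]
  · intro x hx
    have hst : star x = x := by simp
    rw [hst]
    have h1 := quad_Gm_lower β σ t hβ σmax hσpos hσmax htnn x
    have h2 : 0 < x ⬝ᵥ x := dot_self_pos hx
    have hM : (0:ℝ) < (1 + σmax ^ 2)⁻¹ := by positivity
    calc (0:ℝ) < (1 + σmax ^ 2)⁻¹ * (x ⬝ᵥ x) := by positivity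
    _ ≤ x ⬝ᵥ Gm β σ t *ᵥ x := h1

include hβ hσpos hσmax htnn

lemma Gm_det_pos : 0 < (Gm β σ t).det := (Gm_posdef β σ t σmax hβ hσpos hσmax htnn).det_pos

omit hβ hσpos hσmax htnn in
lemma Gam_eq : Gam β σ t = (Gm β σ t)⁻¹ := rfl

lemma Gam_mul_Gm : Gam β σ t * Gm β σ t = 1 := by
  rw [Gam_eq]
  exact Matrix.nonsing_inv_mul _ (Gm_det_pos β σ t σmax hβ hσpos hσmax htnn).ne'.isUnit

lemma Gm_mul_Gam : Gm β σ t * Gam β σ t = 1 := by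
  rw [Gam_eq]
  exact Matrix.mul_nonsing_inv _ (Gm_det_pos β σ t σmax hβ hσpos hσmax htnn).ne'.isUnit

lemma Gam_inv : (Gam β σ t)⁻¹ = Gm β σ t := by
  rw [Gam_eq]
  exact Matrix.nonsing_inv_nonsing_inv _ (Gm_det_pos β σ t σmax hβ hσpos hσmax htnn).ne'.isUnit

lemma Gam_sym : (Gam β σ t)ᵀ = Gam β σ t := by
  rw [Gam_eq, Matrix.transpose_nonsing_inv, Gm_sym β σ t hσpos htnn]

lemma Gam_det_pos : 0 < (Gam β σ t).det := by
  rw [Gam_eq, Matrix.det_nonsing_inv, Ring.inverse_eq_inv']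
  exact inv_pos.2 (Gm_det_pos β σ t σmax hβ hσpos hσmax htnn)

end model2

lemma Lam_det_pos {d : ℕ} (σ : Fin d → ℝ) (t : ℝ) (hσpos : ∀ i, 0 < σ i) (htnn : 0 ≤ t) :
    0 < (Lam σ t).det := by
  rw [Lam, Matrix.det_diagonal]
  exact Finset.prod_pos (fun i _ => lam_pos σ t hσpos htnn i)

end ScoreAux

namespace ScoreAux
section model3
variable {d k : ℕ} (β : Matrix (Fin d) (Fin k) ℝ) (σ : Fin d → ℝ) (t : ℝ)
  (σmax : ℝ) (hβ : βᵀ * β = 1) (hσpos : ∀ i, 0 < σ i) (hσmax : ∀ i, σ i ≤ σmax)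
  (htnn : 0 ≤ t)

/-- the complement matrix `M = Λ⁻¹ - Λ⁻¹ β Γ βᵀ Λ⁻¹` -/
def Mm : Matrix (Fin d) (Fin d) ℝ :=
  (Lam σ t)⁻¹ - (Lam σ t)⁻¹ * β * Gam β σ t * βᵀ * (Lam σ t)⁻¹

/-- the projection matrix `A = Γ βᵀ Λ⁻¹` -/
def Am : Matrix (Fin k) (Fin d) ℝ := Gam β σ t * βᵀ * (Lam σ t)⁻¹

include hσpos htnn in
lemma Li_sym : ((Lam σ t)⁻¹)ᵀ = (Lam σ t)⁻¹ := by
  rw [Lam_inv σ t hσpos htnn, Matrix.diagonal_transpose]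

set_option maxHeartbeats 1000000 in
include hβ hσpos hσmax htnn in
lemma Am_transpose : (Am β σ t)ᵀ = (Lam σ t)⁻¹ * β * Gam β σ t := by
  rw [Am]
  simp only [Matrix.transpose_mul, Matrix.transpose_transpose, Li_sym σ t hσpos htnn,
    Gam_sym β σ t σmax hβ hσpos hσmax htnn, Matrix.mul_assoc]

set_option maxHeartbeats 1000000 in
include hβ hσpos hσmax htnn in
lemma Mm_sym : (Mm β σ t)ᵀ = Mm β σ t := by
  rw [Mm, Matrix.transpose_sub, Li_sym σ t hσpos htnn]
  congr 1
  simp only [Matrix.transpose_mul, Matrix.transpose_transpose, Li_sym σ t hσpos htnn,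
    Gam_sym β σ t σmax hβ hσpos hσmax htnn, Matrix.mul_assoc]

set_option maxHeartbeats 1000000 in
include hβ hσpos hσmax htnn in
/-- the key quadratic-form splitting identity -/
lemma exponent_split (r' : Fin d → ℝ) (f : Fin k → ℝ) :
    (r' - af t • (β *ᵥ f)) ⬝ᵥ (Lam σ t)⁻¹ *ᵥ (r' - af t • (β *ᵥ f))
      = ((Am β σ t *ᵥ r') - af t • f) ⬝ᵥ (Gm β σ t) *ᵥ ((Am β σ t *ᵥ r') - af t • f)
        + r' ⬝ᵥ (Mm β σ t) *ᵥ r' := by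
  have hLis := Li_sym σ t hσpos htnn
  have hGs := Gm_sym β σ t hσpos htnn
  have expand : ∀ (m : ℕ) (S : Matrix (Fin m) (Fin m) ℝ) (_ : Sᵀ = S) (a b : Fin m → ℝ),
      (a - b) ⬝ᵥ S *ᵥ (a - b) = a ⬝ᵥ S *ᵥ a - 2 * (a ⬝ᵥ S *ᵥ b) + b ⬝ᵥ S *ᵥ b := by
    intro m S hS a b
    rw [Matrix.mulVec_sub, dotProduct_sub, sub_dotProduct,
      sub_dotProduct]
    have : b ⬝ᵥ S *ᵥ a = a ⬝ᵥ S *ᵥ b := by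
      rw [dot_mulVec_move S b a, hS, dotProduct_comm]
    rw [this]; ring
  rw [expand d ((Lam σ t)⁻¹) hLis r' (af t • (β *ᵥ f)),
    expand k (Gm β σ t) hGs (Am β σ t *ᵥ r') (af t • f)]
  have hs1 : r' ⬝ᵥ (Lam σ t)⁻¹ *ᵥ (af t • (β *ᵥ f))
      = af t * (r' ⬝ᵥ (Lam σ t)⁻¹ *ᵥ (β *ᵥ f)) := by
    rw [Matrix.mulVec_smul, dotProduct_smul]; simp
  have hs2 : (af t • (β *ᵥ f)) ⬝ᵥ (Lam σ t)⁻¹ *ᵥ (af t • (β *ᵥ f))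
      = af t * (af t * ((β *ᵥ f) ⬝ᵥ (Lam σ t)⁻¹ *ᵥ (β *ᵥ f))) := by
    rw [Matrix.mulVec_smul, dotProduct_smul, smul_dotProduct]
    simp [smul_eq_mul]
  have hs3 : (Am β σ t *ᵥ r') ⬝ᵥ Gm β σ t *ᵥ (af t • f)
      = af t * ((Am β σ t *ᵥ r') ⬝ᵥ Gm β σ t *ᵥ f) := by
    rw [Matrix.mulVec_smul, dotProduct_smul]; simp
  have hs4 : (af t • f) ⬝ᵥ Gm β σ t *ᵥ (af t • f)
      = af t * (af t * (f ⬝ᵥ Gm β σ t *ᵥ f)) := by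
    rw [Matrix.mulVec_smul, dotProduct_smul, smul_dotProduct]
    simp [smul_eq_mul]
  rw [hs1, hs2, hs3, hs4]
  have key1 : (β *ᵥ f) ⬝ᵥ (Lam σ t)⁻¹ *ᵥ (β *ᵥ f) = f ⬝ᵥ Gm β σ t *ᵥ f := by
    rw [Matrix.mulVec_mulVec, dot_mulVec_move ((Lam σ t)⁻¹ * β) (β *ᵥ f) f,
      Matrix.transpose_mul, hLis, Matrix.mulVec_mulVec,
      dot_mulVec_move (Gm β σ t) f f, hGs]
    rfl
  have moveA : ∀ w : Fin k → ℝ,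
      (Am β σ t *ᵥ r') ⬝ᵥ w = r' ⬝ᵥ ((Am β σ t)ᵀ *ᵥ w) := by
    intro w
    rw [dotProduct_comm, dot_mulVec_move (Am β σ t) w r',
      dotProduct_comm]
  have hAmG : (Am β σ t)ᵀ * Gm β σ t = (Lam σ t)⁻¹ * β := by
    rw [Am_transpose β σ t σmax hβ hσpos hσmax htnn,
      Matrix.mul_assoc ((Lam σ t)⁻¹ * β) (Gam β σ t) (Gm β σ t),
      Gam_mul_Gm β σ t σmax hβ hσpos hσmax htnn, Matrix.mul_one]
  have key2 : (Am β σ t *ᵥ r') ⬝ᵥ Gm β σ t *ᵥ f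
      = r' ⬝ᵥ (Lam σ t)⁻¹ *ᵥ (β *ᵥ f) := by
    rw [moveA (Gm β σ t *ᵥ f), Matrix.mulVec_mulVec, hAmG, ← Matrix.mulVec_mulVec]
  have key3 : (Am β σ t *ᵥ r') ⬝ᵥ Gm β σ t *ᵥ (Am β σ t *ᵥ r')
      = r' ⬝ᵥ ((Lam σ t)⁻¹ * β * Gam β σ t * βᵀ * (Lam σ t)⁻¹) *ᵥ r' := by
    rw [moveA (Gm β σ t *ᵥ (Am β σ t *ᵥ r')), Matrix.mulVec_mulVec, hAmG,
      Matrix.mulVec_mulVec, Am]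
    congr 2
    simp only [Matrix.mul_assoc]
  have keyM : r' ⬝ᵥ Mm β σ t *ᵥ r'
      = r' ⬝ᵥ (Lam σ t)⁻¹ *ᵥ r'
        - r' ⬝ᵥ ((Lam σ t)⁻¹ * β * Gam β σ t * βᵀ * (Lam σ t)⁻¹) *ᵥ r' := by
    rw [Mm, Matrix.sub_mulVec, dotProduct_sub]
  rw [key1, key2, key3, keyM]
  ring

end model3
end ScoreAux

namespace ScoreAux
section model4
variable {d k : ℕ} (β : Matrix (Fin d) (Fin k) ℝ) (σ : Fin d → ℝ) (t : ℝ)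
  (σmax : ℝ) (hβ : βᵀ * β = 1) (hσpos : ∀ i, 0 < σ i) (hσmax : ∀ i, σ i ≤ σmax)
  (htnn : 0 ≤ t)

include hσpos htnn in
lemma LamInvSqrt_sq : LamInvSqrt σ t * LamInvSqrt σ t = (Lam σ t)⁻¹ := by
  rw [LamInvSqrt, Matrix.diagonal_mul_diagonal, Lam_inv σ t hσpos htnn]
  have : (fun i => (Real.sqrt (hf t + σ i ^ 2 * af t ^ 2))⁻¹
      * (Real.sqrt (hf t + σ i ^ 2 * af t ^ 2))⁻¹)
      = (fun i => (lam σ t i)⁻¹) := by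
    funext i
    rw [← mul_inv]
    congr 1
    exact Real.mul_self_sqrt (lam_pos σ t hσpos htnn i).le
  rw [this]

include hσpos htnn in
lemma stmt_matrix : LamInvSqrt σ t * (1 - Tproj β σ t) * LamInvSqrt σ t = Mm β σ t := by
  rw [Matrix.mul_sub, Matrix.mul_one, Matrix.sub_mul, LamInvSqrt_sq σ t hσpos htnn, Mm]
  congr 1
  rw [Tproj, ← LamInvSqrt_sq σ t hσpos htnn]
  simp only [Matrix.mul_assoc]

/-- the constant relating the two Gaussian densities -/
def Cr : ℝ :=
  ((2 * Real.pi) ^ (-(d : ℝ) / 2) * (Lam σ t).det ^ (-(1 : ℝ) / 2)) *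
    (((2 * Real.pi) ^ (-(k : ℝ) / 2)) * (Gam β σ t).det ^ (-(1 : ℝ) / 2))⁻¹

include hβ hσpos hσmax htnn in
lemma ck_pos : 0 < ((2 * Real.pi) ^ (-(k : ℝ) / 2)) * (Gam β σ t).det ^ (-(1 : ℝ) / 2) := by
  have h1 : (0:ℝ) < 2 * Real.pi := by positivity
  have h2 := Gam_det_pos β σ t σmax hβ hσpos hσmax htnn
  exact mul_pos (Real.rpow_pos_of_pos h1 _) (Real.rpow_pos_of_pos h2 _)

include hβ hσpos hσmax htnn in
lemma Cr_pos : 0 < Cr β σ t (d := d) := by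
  have h1 : (0:ℝ) < 2 * Real.pi := by positivity
  have h2 := Lam_det_pos σ t hσpos htnn
  exact mul_pos (mul_pos (Real.rpow_pos_of_pos h1 _) (Real.rpow_pos_of_pos h2 _))
    (inv_pos.2 (ck_pos β σ t σmax hβ hσpos hσmax htnn))

include hβ hσpos hσmax htnn in
lemma gauss_split (r' : Fin d → ℝ) (f : Fin k → ℝ) :
    gaussD d r' (af t • (β *ᵥ f)) (Lam σ t)
      = Cr β σ t * Real.exp (-(r' ⬝ᵥ Mm β σ t *ᵥ r') / 2) *
          gaussD k (Am β σ t *ᵥ r') (af t • f) (Gam β σ t) := by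
  unfold gaussD
  rw [Gam_inv β σ t σmax hβ hσpos hσmax htnn,
    exponent_split β σ t σmax hβ hσpos hσmax htnn r' f]
  have hsplit : -((Am β σ t *ᵥ r' - af t • f) ⬝ᵥ Gm β σ t *ᵥ (Am β σ t *ᵥ r' - af t • f)
      + r' ⬝ᵥ Mm β σ t *ᵥ r') / 2
      = (-(r' ⬝ᵥ Mm β σ t *ᵥ r') / 2)
        + (-((Am β σ t *ᵥ r' - af t • f) ⬝ᵥ Gm β σ t *ᵥ (Am β σ t *ᵥ r' - af t • f)) / 2) := by
    ring
  rw [hsplit, Real.exp_add, Cr]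
  have hck := (ck_pos β σ t σmax hβ hσpos hσmax htnn).ne'
  have hg := (Real.rpow_pos_of_pos (Gam_det_pos β σ t σmax hβ hσpos hσmax htnn) (-(1:ℝ)/2)).ne'
  field_simp
  exact (mul_div_cancel_right₀ _ (by rw [neg_div] at hg; exact hg)).symm

include hβ hσpos hσmax htnn in
lemma pT_eq (pfac : (Fin k → ℝ) → ℝ) :
    pT β σ pfac t = fun r' =>
      Cr β σ t * Real.exp (-(r' ⬝ᵥ Mm β σ t *ᵥ r') / 2) *
        pTfac β σ pfac t (Am β σ t *ᵥ r') := by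
  funext r'
  rw [pT, pTfac]
  have : ∀ f : Fin k → ℝ, gaussD d r' (af t • (β *ᵥ f)) (Lam σ t) * pfac f
      = (Cr β σ t * Real.exp (-(r' ⬝ᵥ Mm β σ t *ᵥ r') / 2)) *
          (gaussD k (Am β σ t *ᵥ r') (af t • f) (Gam β σ t) * pfac f) := by
    intro f
    rw [gauss_split β σ t σmax hβ hσpos hσmax htnn r' f]
    ring
  simp_rw [this]
  rw [integral_const_mul]

end model4
end ScoreAux

namespace ScoreAux
section model5
variable {d k : ℕ} (β : Matrix (Fin d) (Fin k) ℝ) (σ : Fin d → ℝ) (t : ℝ)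
  (σmax : ℝ) (hβ : βᵀ * β = 1) (hσpos : ∀ i, 0 < σ i) (hσmax : ∀ i, σ i ≤ σmax)
  (htnn : 0 ≤ t)

omit hβ hσmax in
lemma dot_self_nonneg {m : ℕ} (z : Fin m → ℝ) : 0 ≤ z ⬝ᵥ z := by
  have : z ⬝ᵥ z = ∑ j, z j * z j := rfl
  rw [this]
  exact Finset.sum_nonneg fun j _ => mul_self_nonneg (z j)

include hβ hσpos hσmax htnn in
lemma quad_Gm_nonneg (z : Fin k → ℝ) : 0 ≤ z ⬝ᵥ Gm β σ t *ᵥ z := by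
  refine le_trans ?_ (quad_Gm_lower β σ t hβ σmax hσpos hσmax htnn z)
  have h1 : (0:ℝ) ≤ (1 + σmax ^ 2)⁻¹ := by positivity
  exact mul_nonneg h1 (dot_self_nonneg z)

include hβ hσpos hσmax htnn in
lemma gaussD_fac_eq (y μ : Fin k → ℝ) :
    gaussD k y μ (Gam β σ t)
      = ((2 * Real.pi) ^ (-(k : ℝ) / 2) * (Gam β σ t).det ^ (-(1 : ℝ) / 2)) *
          Real.exp (-((y - μ) ⬝ᵥ Gm β σ t *ᵥ (y - μ)) / 2) := by
  rw [gaussD, Gam_inv β σ t σmax hβ hσpos hσmax htnn]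

include hβ hσpos hσmax htnn in
lemma gaussD_fac_pos (y μ : Fin k → ℝ) : 0 < gaussD k y μ (Gam β σ t) := by
  rw [gaussD_fac_eq β σ t σmax hβ hσpos hσmax htnn]
  exact mul_pos (ck_pos β σ t σmax hβ hσpos hσmax htnn) (Real.exp_pos _)

include hβ hσpos hσmax htnn in
lemma gaussD_fac_le (y μ : Fin k → ℝ) :
    gaussD k y μ (Gam β σ t)
      ≤ (2 * Real.pi) ^ (-(k : ℝ) / 2) * (Gam β σ t).det ^ (-(1 : ℝ) / 2) := by
  rw [gaussD_fac_eq β σ t σmax hβ hσpos hσmax htnn]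
  have h1 : Real.exp (-((y - μ) ⬝ᵥ Gm β σ t *ᵥ (y - μ)) / 2) ≤ 1 := by
    rw [Real.exp_le_one_iff]
    have := quad_Gm_nonneg β σ t σmax hβ hσpos hσmax htnn (y - μ)
    linarith
  nlinarith [ck_pos β σ t σmax hβ hσpos hσmax htnn, Real.exp_pos
    (-((y - μ) ⬝ᵥ Gm β σ t *ᵥ (y - μ)) / 2)]

variable (pfac : (Fin k → ℝ) → ℝ) (hpfac_nonneg : ∀ f, 0 ≤ pfac f)
  (hpfac_prob : (∫ f : Fin k → ℝ, pfac f) = 1) (hpfac_smooth : ContDiff ℝ 2 pfac)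

include hpfac_prob in
lemma pfac_integrable : Integrable pfac := by
  by_contra h
  rw [integral_undef h] at hpfac_prob
  exact one_ne_zero hpfac_prob.symm

omit hβ hσmax htnn in
include hσpos htnn in
lemma quad_cont : Continuous fun z : Fin k → ℝ => z ⬝ᵥ Gm β σ t *ᵥ z := by
  have hGs := Gm_sym β σ t hσpos htnn
  have hdiff : Differentiable ℝ (fun z : Fin k → ℝ => z ⬝ᵥ Gm β σ t *ᵥ z) :=
    fun z => (hasFDerivAt_quadform (Gm β σ t) hGs z).differentiableAt
  exact hdiff.continuous

include hβ hσpos hσmax htnn hpfac_smooth in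
lemma integrand_cont (y : Fin k → ℝ) :
    Continuous fun f : Fin k → ℝ => gaussD k y (af t • f) (Gam β σ t) * pfac f := by
  have h1 : Continuous fun f : Fin k → ℝ => y - af t • f :=
    continuous_const.sub (continuous_id.const_smul (af t))
  have h2 : Continuous fun f : Fin k → ℝ => gaussD k y (af t • f) (Gam β σ t) := by
    have : (fun f : Fin k → ℝ => gaussD k y (af t • f) (Gam β σ t))
        = fun f => ((2 * Real.pi) ^ (-(k : ℝ) / 2) * (Gam β σ t).det ^ (-(1 : ℝ) / 2)) *
            Real.exp (-((y - af t • f) ⬝ᵥ Gm β σ t *ᵥ (y - af t • f)) / 2) := by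
      funext f
      rw [gaussD_fac_eq β σ t σmax hβ hσpos hσmax htnn]
    rw [this]
    exact continuous_const.mul (Real.continuous_exp.comp
      (((quad_cont β σ t hσpos htnn).comp h1).neg.div_const 2))
  exact h2.mul hpfac_smooth.continuous

include hβ hσpos hσmax htnn hpfac_smooth hpfac_prob hpfac_nonneg in
lemma integrand_integrable (y : Fin k → ℝ) :
    Integrable fun f : Fin k → ℝ => gaussD k y (af t • f) (Gam β σ t) * pfac f := by
  set c := (2 * Real.pi) ^ (-(k : ℝ) / 2) * (Gam β σ t).det ^ (-(1 : ℝ) / 2) with hc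
  refine Integrable.mono ((pfac_integrable pfac hpfac_prob).const_mul c)
    (integrand_cont β σ t σmax hβ hσpos hσmax htnn pfac hpfac_smooth y).aestronglyMeasurable
    (Filter.Eventually.of_forall fun f => ?_)
  have h1 := gaussD_fac_pos β σ t σmax hβ hσpos hσmax htnn y (af t • f)
  have h2 := gaussD_fac_le β σ t σmax hβ hσpos hσmax htnn y (af t • f)
  have h3 := hpfac_nonneg f
  rw [Real.norm_eq_abs, Real.norm_eq_abs, abs_of_nonneg (by positivity),
    abs_of_nonneg (by nlinarith [ck_pos β σ t σmax hβ hσpos hσmax htnn])]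
  nlinarith

include hβ hσpos hσmax htnn hpfac_smooth hpfac_prob hpfac_nonneg in
lemma pTfac_pos (y : Fin k → ℝ) : 0 < pTfac β σ pfac t y := by
  rw [pTfac]
  rw [integral_pos_iff_support_of_nonneg]
  · -- support has positive measure
    have hsupp : (Function.support fun f : Fin k → ℝ =>
        gaussD k y (af t • f) (Gam β σ t) * pfac f) = Function.support pfac := by
      ext f
      simp only [Function.mem_support, Ne, mul_eq_zero, not_or]
      constructor
      · exact fun h => h.2
      · intro h
        exact ⟨(gaussD_fac_pos β σ t σmax hβ hσpos hσmax htnn y (af t • f)).ne', h⟩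
    rw [hsupp]
    by_contra h
    push_neg at h
    have h0 : volume (Function.support pfac) = 0 := le_antisymm h zero_le
    have : ∀ᵐ f : Fin k → ℝ, pfac f = 0 := by
      rw [MeasureTheory.ae_iff]
      exact h0
    have := MeasureTheory.integral_eq_zero_of_ae this
    rw [hpfac_prob] at this
    exact one_ne_zero this
  · intro f
    exact mul_nonneg (gaussD_fac_pos β σ t σmax hβ hσpos hσmax htnn y (af t • f)).le
      (hpfac_nonneg f)
  · exact integrand_integrable β σ t σmax hβ hσpos hσmax htnn pfac hpfac_nonneg
      hpfac_prob hpfac_smooth y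

end model5
end ScoreAux

namespace ScoreAux
section model6
variable {d k : ℕ} (β : Matrix (Fin d) (Fin k) ℝ) (σ : Fin d → ℝ) (t : ℝ)
  (σmax : ℝ) (hβ : βᵀ * β = 1) (hσpos : ∀ i, 0 < σ i) (hσmax : ∀ i, σ i ≤ σmax)
  (htnn : 0 ≤ t)

lemma dotCLM_norm_le {m : ℕ} (w : Fin m → ℝ) : ‖dotCLM w‖ ≤ ∑ i, |w i| := by
  refine ContinuousLinearMap.opNorm_le_bound _ (Finset.sum_nonneg fun i _ => abs_nonneg _)
    fun v => ?_
  rw [dotCLM_apply]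
  have h1 : |w ⬝ᵥ v| ≤ ∑ i, |w i * v i| := Finset.abs_sum_le_sum_abs _ _
  have h2 : ∀ i : Fin m, |w i * v i| ≤ |w i| * ‖v‖ := by
    intro i
    rw [abs_mul]
    exact mul_le_mul_of_nonneg_left (norm_le_pi_norm v i) (abs_nonneg _)
  calc ‖w ⬝ᵥ v‖ = |w ⬝ᵥ v| := rfl
  _ ≤ ∑ i, |w i * v i| := h1
  _ ≤ ∑ i, |w i| * ‖v‖ := Finset.sum_le_sum fun i _ => h2 i
  _ = (∑ i, |w i|) * ‖v‖ := by rw [← Finset.sum_mul]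

lemma mulVec_abs_le {m n : ℕ} (G : Matrix (Fin m) (Fin n) ℝ) (z : Fin n → ℝ) :
    ∑ i, |(G *ᵥ z) i| ≤ (∑ i, ∑ j, |G i j|) * ‖z‖ := by
  rw [Finset.sum_mul]
  refine Finset.sum_le_sum fun i _ => ?_
  rw [Finset.sum_mul]
  calc |(G *ᵥ z) i| = |∑ j, G i j * z j| := rfl
  _ ≤ ∑ j, |G i j * z j| := Finset.abs_sum_le_sum_abs _ _
  _ ≤ ∑ j, |G i j| * ‖z‖ := by
      refine Finset.sum_le_sum fun j _ => ?_
      rw [abs_mul]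
      exact mul_le_mul_of_nonneg_left (norm_le_pi_norm z j) (abs_nonneg _)

lemma norm_exp_bound {m : ℕ} (c : ℝ) (hc : 0 < c) (z : Fin m → ℝ) (q : ℝ)
    (hq : c⁻¹ * (z ⬝ᵥ z) ≤ q) : ‖z‖ * Real.exp (-q / 2) ≤ 1 + 2 * c := by
  set s := Real.sqrt (z ⬝ᵥ z) with hs
  have hzz : 0 ≤ z ⬝ᵥ z := dot_self_nonneg z
  have hsnn : 0 ≤ s := Real.sqrt_nonneg _
  have hss : s ^ 2 = z ⬝ᵥ z := Real.sq_sqrt hzz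
  have hzs : ‖z‖ ≤ s := by
    refine (pi_norm_le_iff_of_nonneg hsnn).2 fun i => ?_
    have h1 : z i * z i ≤ z ⬝ᵥ z := by
      have : z ⬝ᵥ z = ∑ j, z j * z j := rfl
      rw [this]
      exact Finset.single_le_sum (fun j _ => mul_self_nonneg (z j)) (Finset.mem_univ i)
    have : |z i| = Real.sqrt (z i * z i) := (Real.sqrt_mul_self_eq_abs _).symm
    rw [Real.norm_eq_abs, this]
    exact Real.sqrt_le_sqrt h1
  have hqpos : 0 ≤ q := le_trans (by positivity) hq
  have hexple : Real.exp (-q / 2) ≤ Real.exp (-(s ^ 2 / c) / 2) := by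
    apply Real.exp_le_exp.2
    rw [hss]
    have : c⁻¹ * (z ⬝ᵥ z) = z ⬝ᵥ z / c := by field_simp
    rw [← this]
    linarith
  rcases le_or_gt s 1 with hs1 | hs1
  · have h2 : Real.exp (-q / 2) ≤ 1 := Real.exp_le_one_iff.2 (by linarith)
    nlinarith [Real.exp_pos (-q / 2), norm_nonneg z]
  · have ha : 0 < s ^ 2 / (2 * c) := by positivity
    have h3 : Real.exp (-(s ^ 2 / c) / 2) ≤ (s ^ 2 / (2 * c))⁻¹ := by
      rw [show -(s ^ 2 / c) / 2 = -(s ^ 2 / (2 * c)) by ring, Real.exp_neg]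
      apply inv_anti₀ ha
      linarith [Real.add_one_le_exp (s ^ 2 / (2 * c))]
    have h4 : (s ^ 2 / (2 * c))⁻¹ = 2 * c / s ^ 2 := by field_simp
    have h5 : ‖z‖ * Real.exp (-q / 2) ≤ s * (2 * c / s ^ 2) := by
      apply mul_le_mul hzs (le_trans hexple (h4 ▸ h3)) (Real.exp_pos _).le hsnn
    have h6 : s * (2 * c / s ^ 2) = 2 * c / s := by
      field_simp
    rw [h6] at h5
    have h7 : 2 * c / s ≤ 2 * c := by
      rw [div_le_iff₀ (by linarith)]
      nlinarith
    linarith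

/-- continuity of `dotCLM` in the vector argument -/
lemma dotCLM_cont {m : ℕ} : Continuous (fun w : Fin m → ℝ => dotCLM w) := by
  have : IsLinearMap ℝ (fun w : Fin m → ℝ => dotCLM w) := by
    constructor
    · intro a b; ext v; simp [add_dotProduct]
    · intro c a; ext v; simp [smul_dotProduct]
  exact LinearMap.continuous_of_finiteDimensional (IsLinearMap.mk' _ this)

variable (pfac : (Fin k → ℝ) → ℝ) (hpfac_nonneg : ∀ f, 0 ≤ pfac f)
  (hpfac_prob : (∫ f : Fin k → ℝ, pfac f) = 1) (hpfac_smooth : ContDiff ℝ 2 pfac)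

/-- derivative of the Gaussian factor integrand in `y` -/
def Fd (y f : Fin k → ℝ) : (Fin k → ℝ) →L[ℝ] ℝ :=
  ((((2 * Real.pi) ^ (-(k : ℝ) / 2) * (Gam β σ t).det ^ (-(1 : ℝ) / 2)) *
      Real.exp (-((y - af t • f) ⬝ᵥ Gm β σ t *ᵥ (y - af t • f)) / 2) * (-(1:ℝ)/2) * pfac f) •
    dotCLM ((2:ℝ) • (Gm β σ t *ᵥ (y - af t • f))))

include hβ hσpos hσmax htnn in
lemma hasFDerivAt_integrand (f : Fin k → ℝ) (y : Fin k → ℝ) :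
    HasFDerivAt (fun y' => gaussD k y' (af t • f) (Gam β σ t) * pfac f)
      (Fd β σ t pfac y f) y := by
  set c0 := (2 * Real.pi) ^ (-(k : ℝ) / 2) * (Gam β σ t).det ^ (-(1 : ℝ) / 2) with hc0
  have hfun : (fun y' => gaussD k y' (af t • f) (Gam β σ t) * pfac f)
      = fun y' => (c0 * Real.exp ((-(1:ℝ)/2) *
          ((y' - af t • f) ⬝ᵥ Gm β σ t *ᵥ (y' - af t • f)))) * pfac f := by
    funext y'
    rw [gaussD_fac_eq β σ t σmax hβ hσpos hσmax htnn, ← hc0]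
    ring_nf
  rw [hfun]
  have hGs := Gm_sym β σ t hσpos htnn
  have h0 : HasFDerivAt (fun y' : Fin k → ℝ => y' - af t • f)
      (ContinuousLinearMap.id ℝ (Fin k → ℝ)) y := (hasFDerivAt_id y).sub_const _
  have h1 := hasFDerivAt_quadform (Gm β σ t) hGs (y - af t • f)
  have h2 : HasFDerivAt (fun y' : Fin k → ℝ =>
      (y' - af t • f) ⬝ᵥ Gm β σ t *ᵥ (y' - af t • f))
      (dotCLM ((2:ℝ) • (Gm β σ t *ᵥ (y - af t • f)))) y := by
    have h := h1.comp y h0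
    rw [ContinuousLinearMap.comp_id] at h
    exact h
  have h3 := h2.const_mul (-(1:ℝ)/2)
  have h4 := h3.exp
  have h5 := (h4.const_mul c0).mul_const (pfac f)
  refine h5.congr_fderiv (Eq.symm ?_)
  rw [Fd]
  ext v
  simp only [ContinuousLinearMap.coe_smul', Pi.smul_apply, smul_eq_mul, ← hc0]
  ring_nf

include hβ hσpos hσmax htnn hpfac_nonneg in
lemma norm_Fd_le (f y : Fin k → ℝ) :
    ‖Fd β σ t pfac y f‖
      ≤ (((2 * Real.pi) ^ (-(k : ℝ) / 2) * (Gam β σ t).det ^ (-(1 : ℝ) / 2)) *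
          (∑ i, ∑ j, |Gm β σ t i j|) * (1 + 2 * (1 + σmax ^ 2))) * pfac f := by
  have hc0pos : 0 < (2 * Real.pi) ^ (-(k : ℝ) / 2) * (Gam β σ t).det ^ (-(1 : ℝ) / 2) :=
    ck_pos β σ t σmax hβ hσpos hσmax htnn
  have hCGnn : (0:ℝ) ≤ ∑ i, ∑ j, |Gm β σ t i j| := Finset.sum_nonneg fun i _ =>
    Finset.sum_nonneg fun j _ => abs_nonneg _
  have hpf := hpfac_nonneg f
  have hexp := Real.exp_pos (-((y - af t • f) ⬝ᵥ Gm β σ t *ᵥ (y - af t • f)) / 2)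
  rw [Fd]
  have hns := norm_smul ((2 * Real.pi) ^ (-(k : ℝ) / 2) * (Gam β σ t).det ^ (-(1 : ℝ) / 2) *
      Real.exp (-((y - af t • f) ⬝ᵥ Gm β σ t *ᵥ (y - af t • f)) / 2) * (-(1:ℝ)/2) * pfac f)
    (dotCLM ((2:ℝ) • (Gm β σ t *ᵥ (y - af t • f))))
  rw [Real.norm_eq_abs] at hns
  rw [hns, abs_mul, abs_mul, abs_mul,
    abs_of_pos hc0pos, abs_of_pos hexp, abs_of_nonneg hpf,
    show |(-(1:ℝ)/2)| = 1/2 by norm_num]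
  -- bound the CLM norm
  have h1 : ‖dotCLM ((2:ℝ) • (Gm β σ t *ᵥ (y - af t • f)))‖
      ≤ 2 * ((∑ i, ∑ j, |Gm β σ t i j|) * ‖y - af t • f‖) := by
    refine le_trans (dotCLM_norm_le _) ?_
    have heq : ∑ i, |((2:ℝ) • (Gm β σ t *ᵥ (y - af t • f))) i|
        = 2 * ∑ i, |(Gm β σ t *ᵥ (y - af t • f)) i| := by
      rw [Finset.mul_sum]
      congr 1
      funext i
      rw [Pi.smul_apply, smul_eq_mul, abs_mul]
      norm_num
    rw [heq]
    have := mulVec_abs_le (Gm β σ t) (y - af t • f)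
    linarith
  have h2 : ‖y - af t • f‖ *
        Real.exp (-((y - af t • f) ⬝ᵥ Gm β σ t *ᵥ (y - af t • f)) / 2)
      ≤ 1 + 2 * (1 + σmax ^ 2) := by
    refine norm_exp_bound (1 + σmax ^ 2) (by positivity) _ _ ?_
    exact quad_Gm_lower β σ t hβ σmax hσpos hσmax htnn (y - af t • f)
  set c0 := (2 * Real.pi) ^ (-(k : ℝ) / 2) * (Gam β σ t).det ^ (-(1 : ℝ) / 2)
  set CG := (∑ i, ∑ j, |Gm β σ t i j|)
  set E := Real.exp (-((y - af t • f) ⬝ᵥ Gm β σ t *ᵥ (y - af t • f)) / 2)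
  set N := ‖y - af t • f‖
  have hNnn : (0:ℝ) ≤ N := norm_nonneg _
  calc c0 * E * (1/2) * pfac f * ‖dotCLM ((2:ℝ) • (Gm β σ t *ᵥ (y - af t • f)))‖
      ≤ c0 * E * (1/2) * pfac f * (2 * (CG * N)) := by
        apply mul_le_mul_of_nonneg_left h1
        positivity
  _ = c0 * CG * pfac f * (N * E) := by ring
  _ ≤ c0 * CG * pfac f * (1 + 2 * (1 + σmax ^ 2)) := by
        apply mul_le_mul_of_nonneg_left h2
        positivity
  _ = c0 * CG * (1 + 2 * (1 + σmax ^ 2)) * pfac f := by ring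

include hβ hσpos hσmax htnn hpfac_smooth in
lemma Fd_cont (y : Fin k → ℝ) : Continuous fun f => Fd β σ t pfac y f := by
  have hv : Continuous fun f : Fin k → ℝ => y - af t • f :=
    continuous_const.sub (continuous_id.const_smul (af t))
  have hscalar : Continuous fun f : Fin k → ℝ =>
      ((2 * Real.pi) ^ (-(k : ℝ) / 2) * (Gam β σ t).det ^ (-(1 : ℝ) / 2)) *
        Real.exp (-((y - af t • f) ⬝ᵥ Gm β σ t *ᵥ (y - af t • f)) / 2) * (-(1:ℝ)/2) *
          pfac f := by
    refine Continuous.mul (Continuous.mul (Continuous.mul continuous_const ?_)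
      continuous_const) hpfac_smooth.continuous
    exact Real.continuous_exp.comp
      ((((quad_cont β σ t hσpos htnn).comp hv).neg).div_const 2)
  have hclm : Continuous fun f : Fin k → ℝ =>
      dotCLM ((2:ℝ) • (Gm β σ t *ᵥ (y - af t • f))) := by
    refine dotCLM_cont.comp ?_
    refine Continuous.const_smul ?_ (2:ℝ)
    have : Continuous fun v : Fin k → ℝ => Gm β σ t *ᵥ v :=
      (mulVecCLM (Gm β σ t)).continuous
    exact this.comp hv
  exact hscalar.smul hclm

include hβ hσpos hσmax htnn hpfac_smooth hpfac_prob hpfac_nonneg in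
lemma pTfac_hasFDerivAt (y₀ : Fin k → ℝ) :
    HasFDerivAt (pTfac β σ pfac t) (∫ f : Fin k → ℝ, Fd β σ t pfac y₀ f) y₀ := by
  have key := hasFDerivAt_integral_of_dominated_of_fderiv_le
    (𝕜 := ℝ) (μ := (volume : Measure (Fin k → ℝ)))
    (F := fun (y : Fin k → ℝ) (f : Fin k → ℝ) => gaussD k y (af t • f) (Gam β σ t) * pfac f)
    (F' := fun (y : Fin k → ℝ) (f : Fin k → ℝ) => Fd β σ t pfac y f)
    (x₀ := y₀)
    (bound := fun f => (((2 * Real.pi) ^ (-(k : ℝ) / 2) * (Gam β σ t).det ^ (-(1 : ℝ) / 2)) *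
          (∑ i, ∑ j, |Gm β σ t i j|) * (1 + 2 * (1 + σmax ^ 2))) * pfac f)
    (s := Metric.ball y₀ 1) (Metric.ball_mem_nhds y₀ one_pos)
    (Filter.Eventually.of_forall fun y =>
      (integrand_cont β σ t σmax hβ hσpos hσmax htnn pfac hpfac_smooth y).aestronglyMeasurable)
    (integrand_integrable β σ t σmax hβ hσpos hσmax htnn pfac hpfac_nonneg hpfac_prob
      hpfac_smooth y₀)
    ((Fd_cont β σ t σmax hβ hσpos hσmax htnn pfac hpfac_smooth y₀).aestronglyMeasurable)
    (Filter.Eventually.of_forall fun f => fun y _ =>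
      norm_Fd_le β σ t σmax hβ hσpos hσmax htnn pfac hpfac_nonneg f y)
    (((pfac_integrable pfac hpfac_prob).const_mul _))
    (Filter.Eventually.of_forall fun f => fun y _ =>
      hasFDerivAt_integrand β σ t σmax hβ hσpos hσmax htnn pfac f y)
  exact key

include hβ hσpos hσmax htnn hpfac_smooth hpfac_prob hpfac_nonneg in
lemma pTfac_diff (y₀ : Fin k → ℝ) : DifferentiableAt ℝ (pTfac β σ pfac t) y₀ :=
  (pTfac_hasFDerivAt β σ t σmax hβ hσpos hσmax htnn pfac hpfac_nonneg hpfac_prob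
    hpfac_smooth y₀).differentiableAt

end model6
end ScoreAux

namespace ScoreAux
lemma dot_single {m : ℕ} (w : Fin m → ℝ) (i : Fin m) : w ⬝ᵥ Pi.single i 1 = w i := by
  rw [dotProduct, Finset.sum_eq_single i]
  · simp
  · intro b _ hb; simp [Pi.single_eq_of_ne hb]
  · simp
end ScoreAux

open ScoreAux

/-- score decomposition under the diffusion factor model. -/
theorem score_decomposition
    (d k : ℕ) (hk1 : 1 ≤ k) (hkd : k ≤ d)
    (β : Matrix (Fin d) (Fin k) ℝ) (hβ : βᵀ * β = 1)
    (pfac : (Fin k → ℝ) → ℝ)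
    (hpfac_nonneg : ∀ f, 0 ≤ pfac f)
    (hpfac_prob : (∫ f : Fin k → ℝ, pfac f) = 1)
    (hpfac_smooth : ContDiff ℝ 2 pfac)
    (hpfac_mom : Integrable (fun f : Fin k → ℝ => eucNorm f ^ 2 * pfac f))
    (σ : Fin d → ℝ) (σmax : ℝ)
    (hσpos : ∀ i, 0 < σ i)
    (hσdec : ∀ i j : Fin d, i ≤ j → σ j ≤ σ i)
    (hσmax : ∀ i, σ i ≤ σmax)
    (t : ℝ) (htnn : 0 ≤ t) (r : Fin d → ℝ) :
    gradv (fun r' => Real.log (pT β σ pfac t r')) r =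
      ((Lam σ t)⁻¹ * β * Gam β σ t) *ᵥ
          gradv (fun y => Real.log (pTfac β σ pfac t y))
            ((Gam β σ t * βᵀ * (Lam σ t)⁻¹) *ᵥ r)
        - (LamInvSqrt σ t * (1 - Tproj β σ t) * LamInvSqrt σ t) *ᵥ r := by
  have hAm : Gam β σ t * βᵀ * (Lam σ t)⁻¹ = Am β σ t := rfl
  rw [hAm]
  set y₀ := Am β σ t *ᵥ r with hy₀
  have hppos : ∀ y, 0 < pTfac β σ pfac t y :=
    pTfac_pos β σ t σmax hβ hσpos hσmax htnn pfac hpfac_nonneg hpfac_prob hpfac_smooth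
  have hpdiff : DifferentiableAt ℝ (pTfac β σ pfac t) y₀ :=
    pTfac_diff β σ t σmax hβ hσpos hσmax htnn pfac hpfac_nonneg hpfac_prob hpfac_smooth y₀
  have hlogdiff : DifferentiableAt ℝ (fun y => Real.log (pTfac β σ pfac t y)) y₀ :=
    hpdiff.log (hppos y₀).ne'
  set L := fderiv ℝ (fun y => Real.log (pTfac β σ pfac t y)) y₀ with hL
  have hgL : HasFDerivAt (fun y => Real.log (pTfac β σ pfac t y)) L y₀ :=
    hlogdiff.hasFDerivAt
  have hA : HasFDerivAt (fun r' : Fin d → ℝ => Am β σ t *ᵥ r')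
      (mulVecCLM (Am β σ t)) r := (mulVecCLM (Am β σ t)).hasFDerivAt
  have hcomp : HasFDerivAt (fun r' => Real.log (pTfac β σ pfac t (Am β σ t *ᵥ r')))
      (L.comp (mulVecCLM (Am β σ t))) r := by have := hgL.comp r hA; exact this
  have hMs := Mm_sym β σ t σmax hβ hσpos hσmax htnn
  have hquad := (hasFDerivAt_quadform (Mm β σ t) hMs r).const_mul (-(1:ℝ)/2)
  have hfun : (fun r' => Real.log (pT β σ pfac t r'))
      = fun r' => Real.log (Cr β σ t) + ((-(1:ℝ)/2) * (r' ⬝ᵥ Mm β σ t *ᵥ r')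
          + Real.log (pTfac β σ pfac t (Am β σ t *ᵥ r'))) := by
    funext r'
    rw [pT_eq β σ t σmax hβ hσpos hσmax htnn pfac]
    have h1 : Cr β σ t ≠ 0 := (Cr_pos β σ t σmax hβ hσpos hσmax htnn).ne'
    have h2 : Real.exp (-(r' ⬝ᵥ Mm β σ t *ᵥ r') / 2) ≠ 0 := (Real.exp_pos _).ne'
    have h3 : pTfac β σ pfac t (Am β σ t *ᵥ r') ≠ 0 := (hppos _).ne'
    rw [Real.log_mul (mul_ne_zero h1 h2) h3, Real.log_mul h1 h2, Real.log_exp]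
    ring
  rw [hfun]
  have htot : HasFDerivAt
      (fun r' => Real.log (Cr β σ t) + ((-(1:ℝ)/2) * (r' ⬝ᵥ Mm β σ t *ᵥ r')
          + Real.log (pTfac β σ pfac t (Am β σ t *ᵥ r'))))
      (((-(1:ℝ)/2) • dotCLM ((2:ℝ) • (Mm β σ t *ᵥ r))) + L.comp (mulVecCLM (Am β σ t)))
      r := (hquad.add hcomp).const_add (Real.log (Cr β σ t))
  funext i
  have hgrad : gradv (fun r' => Real.log (Cr β σ t) + ((-(1:ℝ)/2) * (r' ⬝ᵥ Mm β σ t *ᵥ r')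
          + Real.log (pTfac β σ pfac t (Am β σ t *ᵥ r')))) r i
      = (((-(1:ℝ)/2) • dotCLM ((2:ℝ) • (Mm β σ t *ᵥ r))) + L.comp (mulVecCLM (Am β σ t)))
          (Pi.single i 1) := by
    rw [gradv, htot.fderiv]
  rw [hgrad]
  have hgradfac : gradv (fun y => Real.log (pTfac β σ pfac t y)) y₀
      = fun j => L (Pi.single j 1) := rfl
  rw [hgradfac, Pi.sub_apply, stmt_matrix β σ t hσpos htnn]
  -- expand LHS application
  have hLHS : (((-(1:ℝ)/2) • dotCLM ((2:ℝ) • (Mm β σ t *ᵥ r))) + L.comp (mulVecCLM (Am β σ t)))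
      (Pi.single i 1)
      = -((Mm β σ t *ᵥ r) i) + L (Am β σ t *ᵥ Pi.single i 1) := by
    simp only [ContinuousLinearMap.add_apply, ContinuousLinearMap.smul_apply,
      ContinuousLinearMap.coe_comp', Function.comp_apply, mulVecCLM_apply, dotCLM_apply,
      smul_eq_mul]
    rw [dot_single]
    simp only [Pi.smul_apply, smul_eq_mul]
    ring
  rw [hLHS]
  -- the sum identity
  have hsingle : Am β σ t *ᵥ Pi.single i 1 = ∑ j, (Am β σ t j i) • (Pi.single j 1 : Fin k → ℝ) := by
    ext j
    simp [Matrix.mulVec_single, Finset.sum_apply, Pi.single_apply]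
  have hLsum : L (Am β σ t *ᵥ Pi.single i 1) = ∑ j, Am β σ t j i * L (Pi.single j 1) := by
    rw [hsingle, map_sum]
    congr 1
    funext j
    rw [_root_.map_smul, smul_eq_mul]
  rw [hLsum]
  -- expand the RHS mulVec
  have hRHS : (((Lam σ t)⁻¹ * β * Gam β σ t) *ᵥ fun j => L (Pi.single j 1)) i
      = ∑ j, Am β σ t j i * L (Pi.single j 1) := by
    rw [← Am_transpose β σ t σmax hβ hσpos hσmax htnn]
    rw [Matrix.mulVec]
    rw [dotProduct]
    exact Finset.sum_congr rfl fun j _ => by rw [Matrix.transpose_apply]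
  rw [hRHS]
  ring
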